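/- Let N ≥ 2 be an integer. For real q > 0 set Q = q − q⁻¹, 𝔰(q) = Σ_{i=1}^{N} q^{−2i}, z(q) = q^{2/N} (the positive real N-th root of q²), and μ(q) = 𝔰(q)(z(q)⁻¹ − 1) + z(q)⁻¹ q⁻¹ Q. Let α, β : (0,∞) → ℂ be functions and c₀, c₁ ∈ ℂ with c₁ ≠ 0 such that, as q → 1 (q ≠ 1), Q²α(q) → c₁ and Q⁴(α(q) + 𝔰(q)β(q)) → c₀. Then, as q → 1 (q ≠ 1), z(q)² q² μ(q) (α(q) + 𝔰(q)β(q)) / (2α(q)) → (N² − 1)c₀ / (4N c₁). -/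

import Mathlib

open scoped BigOperators Topology
open Filter

namespace Stmt12

/-- `Q = q − q⁻¹`, as a complex number depending on a real parameter `q`. -/
noncomputable def Qc (q : ℝ) : ℂ := (q : ℂ) - (q : ℂ)⁻¹

/-- `𝔰(q) = Σ_{i=1}^{N} q^{−2i}`. -/
noncomputable def sc (N : ℕ) (q : ℝ) : ℂ := ∑ i : Fin N, (q : ℂ) ^ (-(2 * ((i.1 : ℤ) + 1)))

/-- `z(q) = q^{2/N}`, the positive real `N`-th root of `q²`, viewed in `ℂ`. -/
noncomputable def zc (N : ℕ) (q : ℝ) : ℂ := ((q ^ ((2 : ℝ) / (N : ℝ)) : ℝ) : ℂ)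

/-- `μ(q) = 𝔰(q)(z(q)⁻¹ − 1) + z(q)⁻¹ q⁻¹ Q`. -/
noncomputable def muc (N : ℕ) (q : ℝ) : ℂ :=
  sc N q * ((zc N q)⁻¹ - 1) + (zc N q)⁻¹ * (q : ℂ)⁻¹ * Qc q

lemma key (r : ℝ) :
    Tendsto (fun q : ℝ => (q ^ r - 1 - r * (q - 1)) / (q - 1) ^ 2)
      (𝓝[≠] (1:ℝ)) (𝓝 (r * (r - 1) / 2)) := by
  have hIoi : Set.Ioi (0:ℝ) ∈ 𝓝 (1:ℝ) := Ioi_mem_nhds one_pos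
  have hIoi' : ∀ᶠ q in 𝓝[≠] (1:ℝ), (0:ℝ) < q :=
    eventually_nhdsWithin_of_eventually_nhds (eventually_of_mem hIoi fun x hx => hx)
  have hne : ∀ᶠ q in 𝓝[≠] (1:ℝ), q ≠ (1:ℝ) := by
    filter_upwards [self_mem_nhdsWithin] with q hq using hq
  apply HasDerivAt.lhopital_zero_nhdsNE
    (f' := fun q => r * q ^ (r - 1) - r) (g' := fun q => 2 * (q - 1))
  · filter_upwards [hIoi'] with q hq
    have h1 : HasDerivAt (fun x : ℝ => x ^ r) (r * q ^ (r - 1)) q :=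
      Real.hasDerivAt_rpow_const (Or.inl hq.ne')
    have h2 : HasDerivAt (fun x : ℝ => r * (x - 1)) (r * 1) q :=
      ((hasDerivAt_id q).sub_const 1).const_mul r
    exact (h1.sub_const 1).sub (by simpa using h2 : HasDerivAt (fun x : ℝ => r * (x - 1)) r q)
  · filter_upwards with q
    have : HasDerivAt (fun x : ℝ => (x - 1) ^ 2) (2 * (q - 1) ^ 1 * 1) q :=
      ((hasDerivAt_id q).sub_const 1).pow 2
    simpa using this
  · filter_upwards [hne] with q hq
    simpa [sub_ne_zero] using hq
  · have hc : ContinuousAt (fun x : ℝ => x ^ r - 1 - r * (x - 1)) 1 := by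
      exact ((Real.continuousAt_rpow_const 1 r (Or.inl one_ne_zero)).sub continuousAt_const).sub
        ((continuousAt_id.sub continuousAt_const).const_mul r)
    have := hc.tendsto
    simp [Real.one_rpow] at this
    exact this.mono_left nhdsWithin_le_nhds
  · have : Tendsto (fun q : ℝ => (q - 1) ^ 2) (𝓝 1) (𝓝 (((1:ℝ) - 1) ^ 2)) :=
      ((continuous_id.sub continuous_const).pow 2).tendsto 1
    simp at this
    exact this.mono_left nhdsWithin_le_nhds
  · have hslope : Tendsto (slope (fun x : ℝ => x ^ (r - 1)) 1) (𝓝[≠] 1) (𝓝 (r - 1)) := by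
      have h : HasDerivAt (fun x : ℝ => x ^ (r - 1)) ((r-1) * (1:ℝ) ^ (r - 1 - 1)) 1 :=
        Real.hasDerivAt_rpow_const (Or.inl one_ne_zero)
      rw [Real.one_rpow, mul_one] at h
      exact hasDerivAt_iff_tendsto_slope.mp h
    have := hslope.const_mul (r / 2)
    rw [show r * (r - 1) / 2 = r / 2 * (r - 1) by ring]
    apply this.congr'
    filter_upwards [self_mem_nhdsWithin] with q hq
    have hq1 : q - 1 ≠ 0 := sub_ne_zero.mpr hq
    rw [slope_def_field]
    field_simp [Real.one_rpow]
    rw [Real.one_rpow]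

lemma sum_range_id_real (N : ℕ) : ∑ i ∈ Finset.range N, (i : ℝ) = N * (N - 1) / 2 := by
  induction N with
  | zero => simp
  | succ n ih => rw [Finset.sum_range_succ, ih]; push_cast; ring


noncomputable def Sf (N : ℕ) (q : ℝ) : ℝ :=
  (∑ i : Fin N, (q ^ (2/(N:ℝ) + 2 - 2*(((i:ℕ):ℝ)+1))
      - q ^ (2*(2/(N:ℝ)) + 2 - 2*(((i:ℕ):ℝ)+1))))
    + q ^ (2/(N:ℝ) + 2) - q ^ (2/(N:ℝ))


lemma Sf_eq (N : ℕ) (q : ℝ) (hq : 0 < q) :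
    (q ^ ((2:ℝ)/(N:ℝ)))^2 * q^2 *
      ((∑ i : Fin N, q ^ (-(2 * ((i.1:ℤ) + 1)))) * ((q ^ ((2:ℝ)/(N:ℝ)))⁻¹ - 1)
        + (q ^ ((2:ℝ)/(N:ℝ)))⁻¹ * q⁻¹ * (q - q⁻¹)) = Sf N q := by
  have h7 : q - q⁻¹ = q ^ (1:ℝ) - q ^ (-1:ℝ) := by
    rw [Real.rpow_one, Real.rpow_neg_one]
  have h6 : q⁻¹ = q ^ (-1:ℝ) := (Real.rpow_neg_one q).symm
  have hzz : (q ^ ((2:ℝ)/(N:ℝ)))^2 * q^2 = q ^ ((2:ℝ)/(N:ℝ) * 2 + 2) := by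
    rw [Real.rpow_add hq, ← Real.rpow_natCast (q ^ ((2:ℝ)/(N:ℝ))) 2,
      ← Real.rpow_mul hq.le, ← Real.rpow_natCast q 2]
    norm_num
  rw [h7, h6]
  simp only [← Real.rpow_intCast q, h6, (Real.rpow_neg hq.le _).symm]
  rw [hzz, mul_add, Finset.sum_mul, Finset.mul_sum]
  unfold Sf
  rw [add_sub_assoc]
  congr 1
  · apply Finset.sum_congr rfl
    intro i _
    simp only [mul_sub, mul_one, ← Real.rpow_add hq]
    congr 1 <;> · congr 1; push_cast; ring
  · simp only [mul_sub, mul_one, ← Real.rpow_add hq]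
    congr 1 <;> · congr 1; ring

lemma tendsto_Sf (N : ℕ) (hN : (N:ℝ) ≠ 0) :
    Tendsto (fun q : ℝ => Sf N q / (q - 1) ^ 2) (𝓝[≠] (1:ℝ))
      (𝓝 (2 * ((N:ℝ)^2 - 1) / N)) := by
  simp only [Sf]
  have huN' : (N:ℝ) * (2/(N:ℝ)) = 2 := by field_simp
  generalize hu : (2:ℝ)/(N:ℝ) = u
  rw [hu] at huN'
  set s : Fin N → ℝ := fun i => u + 2 - 2*(((i:ℕ):ℝ)+1) with hs
  set t : Fin N → ℝ := fun i => 2*u + 2 - 2*(((i:ℕ):ℝ)+1) with ht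
  have hlim : Tendsto
      (fun q : ℝ => (∑ i : Fin N,
          ((q ^ (s i) - 1 - s i * (q - 1)) / (q - 1) ^ 2
            - (q ^ (t i) - 1 - t i * (q - 1)) / (q - 1) ^ 2))
        + (q ^ (u+2) - 1 - (u+2) * (q - 1)) / (q - 1) ^ 2
        - (q ^ u - 1 - u * (q - 1)) / (q - 1) ^ 2)
      (𝓝[≠] (1:ℝ))
      (𝓝 ((∑ i : Fin N, (s i * (s i - 1) / 2 - t i * (t i - 1) / 2))
        + (u+2) * ((u+2) - 1) / 2 - u * (u - 1) / 2)) :=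
    ((tendsto_finset_sum _ (fun i _ => (key (s i)).sub (key (t i)))).add
      (key (u+2))).sub (key u)
  have hval : (∑ i : Fin N, (s i * (s i - 1) / 2 - t i * (t i - 1) / 2))
      + (u+2) * ((u+2) - 1) / 2 - u * (u - 1) / 2 = 2 * ((N:ℝ)^2 - 1) / N := by
    have hterm : ∀ i : Fin N,
        s i * (s i - 1) / 2 - t i * (t i - 1) / 2
          = (-3*u^2 + u)/2 + (2*u) * ((i:ℕ):ℝ) := by
      intro i; simp only [hs, ht]; ring
    rw [Finset.sum_congr rfl (fun i _ => hterm i), Finset.sum_add_distrib,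
      Finset.sum_const, ← Finset.mul_sum, Finset.card_univ, Fintype.card_fin,
      Fin.sum_univ_eq_sum_range (fun i => ((i:ℕ):ℝ)), sum_range_id_real,
      nsmul_eq_mul, eq_div_iff hN]
    linear_combination (-(3/2)*(N:ℝ)*u + (N:ℝ)^2 - (N:ℝ)/2 - 1) * huN'
  rw [← hval]
  apply hlim.congr'
  filter_upwards [self_mem_nhdsWithin] with q hq
  have hq1 : (q - 1) ≠ 0 := sub_ne_zero.mpr hq
  have hnum : (∑ i : Fin N, ((q ^ (s i) - 1 - s i * (q-1))
        - (q ^ (t i) - 1 - t i * (q-1))))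
      + (q ^ (u+2) - 1 - (u+2) * (q-1)) - (q ^ u - 1 - u * (q-1))
      = (∑ i : Fin N, (q ^ (s i) - q ^ (t i))) + q ^ (u+2) - q ^ u := by
    have hterm : ∀ i : Fin N,
        (q ^ (s i) - 1 - s i * (q-1)) - (q ^ (t i) - 1 - t i * (q-1))
          = (q ^ (s i) - q ^ (t i)) + u * (q - 1) := by
      intro i; simp only [hs, ht]; ring
    rw [Finset.sum_congr rfl (fun i _ => hterm i), Finset.sum_add_distrib,
      Finset.sum_const, Finset.card_univ, Fintype.card_fin, nsmul_eq_mul]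
    linear_combination (q - 1) * huN'
  rw [← hnum]
  simp only [sub_div, add_div, Finset.sum_div]

lemma muS (N : ℕ) (q : ℝ) (hq : 0 < q) :
    (zc N q)^2 * (q:ℂ)^2 * muc N q = ((Sf N q : ℝ) : ℂ) := by
  rw [← Sf_eq N q hq]
  unfold muc sc zc Qc
  push_cast [Complex.ofReal_zpow]
  ring


/-- Classical limit of the coefficient of the Levi-Civita connection on `Γ_{+,z}`:
if `Q²α(q) → c₁ ≠ 0` and `Q⁴(α(q) + 𝔰(q)β(q)) → c₀` as `q → 1` (within `(0,∞)`, `q ≠ 1`),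
then `z(q)² q² μ(q)(α(q) + 𝔰(q)β(q))/(2α(q)) → (N² − 1)c₀/(4Nc₁)`. -/
theorem classical_limit_connection_coefficient (N : ℕ) (hN : 2 ≤ N)
    (α β : ℝ → ℂ) (c0 c1 : ℂ) (hc1 : c1 ≠ 0)
    (h1 : Tendsto (fun q : ℝ => (Qc q) ^ 2 * α q)
      (𝓝[Set.Ioi (0 : ℝ) \ {1}] 1) (𝓝 c1))
    (h0 : Tendsto (fun q : ℝ => (Qc q) ^ 4 * (α q + sc N q * β q))
      (𝓝[Set.Ioi (0 : ℝ) \ {1}] 1) (𝓝 c0)) :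
    Tendsto
      (fun q : ℝ =>
        (zc N q) ^ 2 * (q : ℂ) ^ 2 * muc N q * (α q + sc N q * β q) / (2 * α q))
      (𝓝[Set.Ioi (0 : ℝ) \ {1}] 1)
      (𝓝 (((N : ℂ) ^ 2 - 1) * c0 / (4 * (N : ℂ) * c1))) := by
  have hNR : (N:ℝ) ≠ 0 := Nat.cast_ne_zero.mpr (by omega)
  have hNC : (N:ℂ) ≠ 0 := Nat.cast_ne_zero.mpr (by omega)
  set F := 𝓝[Set.Ioi (0 : ℝ) \ {1}] (1:ℝ) with hF
  have hle : F ≤ 𝓝[≠] (1:ℝ) := nhdsWithin_mono _ (fun x hx => hx.2)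
  have hlenhds : F ≤ 𝓝 (1:ℝ) := nhdsWithin_le_nhds
  -- the three factors
  have T1 : Tendsto (fun q : ℝ => ((Sf N q / (q - 1) ^ 2 : ℝ) : ℂ)) F
      (𝓝 (2 * ((N:ℂ)^2 - 1) / N)) := by
    have := (Complex.continuous_ofReal.tendsto _).comp
      ((tendsto_Sf N hNR).mono_left hle)
    convert this using 2
    · rfl
    · norm_num
  have hq1 : Tendsto (fun q : ℝ => (q : ℂ)) F (𝓝 1) := by
    have := (Complex.continuous_ofReal.tendsto (1:ℝ)).mono_left hlenhds
    simpa using this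
  have T2 : Tendsto (fun q : ℝ => ((q:ℂ) / ((q:ℂ) + 1)) ^ 2) F (𝓝 (1/4 : ℂ)) := by
    have h2 : Tendsto (fun q : ℝ => (q:ℂ) / ((q:ℂ) + 1)) F (𝓝 (1 / (1 + 1))) :=
      hq1.div (hq1.add tendsto_const_nhds) (by norm_num)
    have he : ((1:ℂ) / (1 + 1)) ^ 2 = 1/4 := by norm_num
    rw [← he]
    exact h2.pow 2
  have T3 : Tendsto (fun q : ℝ => (Qc q) ^ 4 * (α q + sc N q * β q) / (2 * ((Qc q) ^ 2 * α q)))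
      F (𝓝 (c0 / (2 * c1))) :=
    h0.div (tendsto_const_nhds.mul h1) (by simpa using hc1)
  have Tprod := (T1.mul T2).mul T3
  have hval : 2 * ((N:ℂ)^2 - 1) / N * (1/4) * (c0 / (2 * c1))
      = ((N : ℂ) ^ 2 - 1) * c0 / (4 * (N : ℂ) * c1) := by
    field_simp
  rw [hval] at Tprod
  apply Tprod.congr'
  filter_upwards [self_mem_nhdsWithin] with q hq
  obtain ⟨hq0, hqne⟩ := hq
  have hq0' : (0:ℝ) < q := hq0
  have hqC : (q:ℂ) ≠ 0 := by exact_mod_cast hq0'.ne'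
  have hq1C : (q:ℂ) - 1 ≠ 0 := by
    simp only [ne_eq, sub_eq_zero]
    exact_mod_cast hqne
  have hq2C : (q:ℂ) + 1 ≠ 0 := by
    intro h
    have hre : ((q:ℂ) + 1).re = q + 1 := by simp
    rw [h] at hre
    simp at hre
    linarith
  have hQfac : Qc q = ((q:ℂ) - 1) * ((q:ℂ) + 1) / q := by
    unfold Qc; field_simp; ring
  have hQne : Qc q ≠ 0 := by
    rw [hQfac]
    exact div_ne_zero (mul_ne_zero hq1C hq2C) hqC
  rw [muS N q hq0']
  push_cast
  by_cases hα : α q = 0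
  · simp [hα]
  · have hQ2 : Qc q ^ 2 * (q:ℂ)^2 = ((q:ℂ)-1)^2*((q:ℂ)+1)^2 := by
      rw [hQfac, div_pow, div_mul_eq_mul_div, div_eq_iff (pow_ne_zero 2 hqC)]
      ring
    rw [div_pow, div_mul_div_comm, div_mul_div_comm,
      div_eq_div_iff
        (mul_ne_zero (mul_ne_zero (pow_ne_zero _ hq1C) (pow_ne_zero _ hq2C))
          (mul_ne_zero two_ne_zero (mul_ne_zero (pow_ne_zero _ hQne) hα)))
        (mul_ne_zero two_ne_zero hα)]
    linear_combination (2 * (Sf N q : ℂ) * (α q + sc N q * β q) * α q * Qc q ^ 2) * hQ2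

end Stmt12
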